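/- arXiv:hep-th/0309018 — 3 statements merged into one kernel-verified Lean document; each statement's English description precedes it below -/
import Mathlib

section
/- The function φ^Z has a simple pole at z = 0: the limit of z·φ^Z(z) as z → 0 (z ≠ 0) exists and equals 2i/sin(π/N). Consequently the normalization constant R = 2πi·Res_{z=0} φ^Z(z) equals −4π/sin(π/N). -/
open Complex Topology Filter

/-- `φ^Z(z) = 1/(sinh(z/2)·sinh(½(z − 2πi/N)))`. -/
noncomputable def phiZ (N : ℕ) (z : ℂ) : ℂ :=
  1 / (Complex.sinh (z / 2) * Complex.sinh ((z - 2 * (Real.pi : ℂ) * I / N) / 2))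

lemma sin_pi_div_ne_zero (N : ℕ) (hN : 2 ≤ N) :
    Complex.sin ((Real.pi : ℂ) / N) ≠ 0 := by
  have h : ((Real.sin (Real.pi / N) : ℝ) : ℂ) = Complex.sin ((Real.pi : ℂ) / N) := by
    rw [Complex.ofReal_sin]; push_cast; ring_nf
  rw [← h]
  have hN1 : (1:ℝ) < N := by exact_mod_cast Nat.lt_of_lt_of_le one_lt_two hN
  have h0 : 0 < Real.pi / N := div_pos Real.pi_pos (by linarith)
  have h1 : Real.pi / N < Real.pi := by
    rw [div_lt_iff₀ (by linarith)]
    nlinarith [Real.pi_pos]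
  exact_mod_cast (Real.sin_pos_of_pos_of_lt_pi h0 h1).ne'

/-- `φ^Z` has a simple pole at `z = 0` with residue `2i/sin(π/N)`, hence
`R = 2πi·Res_{z=0} φ^Z = −4π/sin(π/N)`. -/
theorem phiZ_residue_at_zero (N : ℕ) (hN : 2 ≤ N) :
    Tendsto (fun z : ℂ => z * phiZ N z) (𝓝[≠] (0 : ℂ))
      (𝓝 (2 * I / Complex.sin ((Real.pi : ℂ) / N))) ∧
    2 * (Real.pi : ℂ) * I * (2 * I / Complex.sin ((Real.pi : ℂ) / N)) =
      -4 * (Real.pi : ℂ) / Complex.sin ((Real.pi : ℂ) / N) := by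
  have hs := sin_pi_div_ne_zero N hN
  set s := Complex.sin ((Real.pi : ℂ) / N) with hs_def
  have hNne : (N : ℂ) ≠ 0 := by
    exact_mod_cast Nat.cast_ne_zero.mpr (by omega)
  constructor
  · -- first factor: z / sinh (z/2) → 2
    have hd : HasDerivAt (fun z : ℂ => Complex.sinh (z / 2)) (1/2) 0 := by
      have := ((Complex.hasDerivAt_sinh ((0:ℂ)/2)).comp 0
        ((hasDerivAt_id (0:ℂ)).div_const 2))
      simpa [Function.comp_def] using this
    have h1 : Tendsto (fun z : ℂ => Complex.sinh (z / 2) / z) (𝓝[≠] 0) (𝓝 (1/2)) := by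
      have := hasDerivAt_iff_tendsto_slope.mp hd
      refine this.congr fun z => ?_
      simp [slope_def_field]
    have h1' : Tendsto (fun z : ℂ => z / Complex.sinh (z / 2)) (𝓝[≠] 0) (𝓝 2) := by
      have := h1.inv₀ (by norm_num)
      simpa [inv_div] using this
    -- second factor: 1 / sinh ((z - c)/2) → 1 / (-(s * I))
    have hval : Complex.sinh (((0:ℂ) - 2 * (Real.pi : ℂ) * I / N) / 2) = -(s * I) := by
      have h : ((0:ℂ) - 2 * (Real.pi : ℂ) * I / N) / 2 = -(((Real.pi : ℂ) / N) * I) := by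
        field_simp; ring
      rw [h, Complex.sinh_neg, Complex.sinh_mul_I]
    have hvne : Complex.sinh (((0:ℂ) - 2 * (Real.pi : ℂ) * I / N) / 2) ≠ 0 := by
      rw [hval]; simp [hs, Complex.I_ne_zero]
    have h2 : Tendsto (fun z : ℂ => 1 / Complex.sinh ((z - 2 * (Real.pi : ℂ) * I / N) / 2))
        (𝓝[≠] 0) (𝓝 (1 / (-(s * I)))) := by
      have hc : Continuous fun z : ℂ =>
          Complex.sinh ((z - 2 * (Real.pi : ℂ) * I / N) / 2) :=
        Complex.continuous_sinh.comp ((continuous_id.sub continuous_const).div_const 2)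
      have hca : ContinuousAt (fun z : ℂ =>
          1 / Complex.sinh ((z - 2 * (Real.pi : ℂ) * I / N) / 2)) 0 :=
        continuousAt_const.div hc.continuousAt hvne
      have := hca.tendsto
      rw [show Complex.sinh (((0:ℂ) - 2 * (Real.pi : ℂ) * I / N) / 2) = -(s*I) from hval] at this
      exact this.mono_left nhdsWithin_le_nhds
    have key : Tendsto (fun z : ℂ =>
        (z / Complex.sinh (z / 2)) *
          (1 / Complex.sinh ((z - 2 * (Real.pi : ℂ) * I / N) / 2)))
        (𝓝[≠] 0) (𝓝 (2 * (1 / (-(s * I))))) := h1'.mul h2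
    have heq : (2 : ℂ) * (1 / (-(s * I))) = 2 * I / s := by
      rw [one_div, inv_neg, mul_inv, Complex.inv_I, div_eq_mul_inv]
      ring
    rw [heq] at key
    refine key.congr fun z => ?_
    simp only [phiZ]
    rw [mul_one_div, div_div, mul_one_div]
  · field_simp
    linear_combination 4 * Complex.I_sq
end

section
/- The function φ^T has a simple pole at z = iu with u = 2π/N: the limit of (z − 2πi/N)·φ^T(z) as z → 2πi/N (z ≠ 2πi/N) exists and equals r = 2i·sin(πB/(2N))·sin(π(2−B)/(2N))/sin(π/N). -/
open Complex Topology Filter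

lemma sinh_I_mul (w : ℂ) : Complex.sinh (I * w) = I * Complex.sin w := by
  have h := Complex.sin_mul_I (I * w)
  have h2 : I * w * I = -w := by
    rw [mul_comm, ← mul_assoc, Complex.I_mul_I]; ring
  rw [h2, Complex.sin_neg] at h
  linear_combination I * h + Complex.sinh (I * w) * Complex.I_sq

lemma sinh_ne_zero_of_small {w : ℂ} (hw : w ≠ 0) (hw2 : ‖w‖ < 3) : Complex.sinh w ≠ 0 := by
  intro h
  have h1 : Complex.sin (w * I) = 0 := by rw [Complex.sin_mul_I, h, zero_mul]
  rw [Complex.sin_eq_zero_iff] at h1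
  obtain ⟨k, hk⟩ := h1
  rcases eq_or_ne k 0 with rfl | hk0
  · rw [Int.cast_zero, zero_mul, mul_eq_zero] at hk
    rcases hk with hk | hk
    · exact hw hk
    · exact Complex.I_ne_zero hk
  · have hn : ‖w * I‖ = ‖w‖ := by simp
    have h3 : (1:ℝ) * Real.pi ≤ ‖w * I‖ := by
      rw [hk]
      have hnk : ‖((k:ℂ) * (Real.pi:ℂ))‖ = |(k:ℝ)| * Real.pi := by
        rw [norm_mul]
        simp [Real.norm_eq_abs, _root_.abs_of_nonneg Real.pi_nonneg]
      rw [hnk]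
      have hk1 : (1:ℝ) ≤ |(k:ℝ)| := by
        rw [← Int.cast_abs]
        exact_mod_cast (Int.one_le_abs hk0)
      nlinarith [Real.pi_pos]
    rw [hn] at h3
    nlinarith [Real.pi_gt_three]

/-- `φ^T(z) = φ^Z(z)·sinh(½(z − iπB/N))·sinh(½(z − iπ(2−B)/N))`. -/
noncomputable def phiT (N : ℕ) (B : ℝ) (z : ℂ) : ℂ :=
  phiZ N z * Complex.sinh ((z - I * (Real.pi : ℂ) * (B : ℂ) / N) / 2) *
    Complex.sinh ((z - I * (Real.pi : ℂ) * (2 - (B : ℂ)) / N) / 2)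

/-- `φ^T` has a simple pole at `z = iu`, `u = 2π/N`, with residue
`r = 2i·sin(πB/(2N))·sin(π(2−B)/(2N))/sin(π/N)`. -/
theorem phiT_residue_at_iu (N : ℕ) (hN : 2 ≤ N) (B : ℝ) (hB0 : 0 < B) (hB2 : B < 2) :
    Tendsto (fun z : ℂ => (z - 2 * (Real.pi : ℂ) * I / N) * phiT N B z)
      (𝓝[≠] (2 * (Real.pi : ℂ) * I / N))
      (𝓝 (2 * I * Complex.sin ((Real.pi : ℂ) * (B : ℂ) / (2 * N)) *
        Complex.sin ((Real.pi : ℂ) * (2 - (B : ℂ)) / (2 * N)) /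
        Complex.sin ((Real.pi : ℂ) / N))) := by
  have hNR : (2:ℝ) ≤ (N:ℝ) := by exact_mod_cast hN
  have hN0 : (N:ℂ) ≠ 0 := Nat.cast_ne_zero.mpr (by omega)
  set c : ℂ := 2 * (Real.pi : ℂ) * I / N with hc
  set a : ℂ := I * (Real.pi : ℂ) * (B : ℂ) / N with ha
  set b : ℂ := I * (Real.pi : ℂ) * (2 - (B : ℂ)) / N with hb
  -- sin (π/N) is real positive
  have hsinR : (0:ℝ) < Real.sin (Real.pi / N) := by
    apply Real.sin_pos_of_pos_of_lt_pi
    · positivity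
    · have := Real.pi_pos
      rw [div_lt_iff₀ (by linarith : (0:ℝ) < N)]
      nlinarith
  have hsin : Complex.sin ((Real.pi : ℂ) / N) ≠ 0 := by
    have : ((Real.pi / N : ℝ) : ℂ) = (Real.pi : ℂ) / N := by push_cast; ring
    rw [← this, ← Complex.ofReal_sin]
    exact_mod_cast hsinR.ne'
  -- sinh (c/2) = I * sin(π/N) ≠ 0
  have hc2 : c / 2 = I * ((Real.pi : ℂ) / N) := by rw [hc]; ring
  have hsinhc : Complex.sinh (c / 2) = I * Complex.sin ((Real.pi : ℂ) / N) := by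
    rw [hc2, sinh_I_mul]
  have hsinhc0 : Complex.sinh (c / 2) ≠ 0 := by
    rw [hsinhc]; exact mul_ne_zero Complex.I_ne_zero hsin
  -- continuous part g
  set g : ℂ → ℂ := fun z => Complex.sinh ((z - a) / 2) * Complex.sinh ((z - b) / 2) /
      Complex.sinh (z / 2) with hg
  have hgcont : ContinuousAt g c := by
    apply ContinuousAt.div
    · fun_prop
    · fun_prop
    · exact hsinhc0
  -- slope part
  have hslope : Tendsto (fun w : ℂ => Complex.sinh w / w) (𝓝[≠] (0:ℂ)) (𝓝 1) := by
    have h := (hasDerivAt_iff_tendsto_slope).mp (Complex.hasDerivAt_sinh 0)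
    rw [Complex.cosh_zero] at h
    refine h.congr' ?_
    filter_upwards [self_mem_nhdsWithin] with w hw
    simp [slope_def_field, Complex.sinh_zero]
  have hφ : Tendsto (fun z : ℂ => (z - c) / 2) (𝓝[≠] c) (𝓝[≠] (0:ℂ)) := by
    apply tendsto_nhdsWithin_of_tendsto_nhds_of_eventually_within
    · have hcont : Tendsto (fun z : ℂ => (z - c) / 2) (𝓝 c) (𝓝 ((c - c)/2)) :=
        ((continuous_id.sub continuous_const).div_const 2).tendsto c
      simp only [sub_self, zero_div] at hcont
      exact hcont.mono_left nhdsWithin_le_nhds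
    · filter_upwards [self_mem_nhdsWithin] with z hz
      simp only [Set.mem_compl_iff, Set.mem_singleton_iff] at hz ⊢
      intro h
      apply hz
      have : z - c = 0 := by
        field_simp at h
        simpa using h
      exact sub_eq_zero.mp this
  have h1 : Tendsto (fun z : ℂ => Complex.sinh ((z - c)/2) / ((z - c)/2)) (𝓝[≠] c) (𝓝 1) :=
    hslope.comp hφ
  have h2 : Tendsto (fun z : ℂ => ((z - c)/2) / Complex.sinh ((z - c)/2)) (𝓝[≠] c) (𝓝 1) := by
    have h := h1.inv₀ one_ne_zero
    rw [inv_one] at h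
    refine h.congr fun z => ?_
    rw [inv_div]
  have h3 : Tendsto g (𝓝[≠] c) (𝓝 (g c)) :=
    (hgcont.tendsto).mono_left nhdsWithin_le_nhds
  have h4 : Tendsto (fun z : ℂ => ((z - c)/2 / Complex.sinh ((z - c)/2)) * (2 * g z))
      (𝓝[≠] c) (𝓝 (1 * (2 * g c))) :=
    h2.mul (h3.const_mul 2)
  have heq : ∀ᶠ z in 𝓝[≠] c,
      ((z - c)/2 / Complex.sinh ((z - c)/2)) * (2 * g z) = (z - c) * phiT N B z := by
    have hball : Metric.ball c 1 ∈ 𝓝 c := Metric.ball_mem_nhds c one_pos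
    filter_upwards [self_mem_nhdsWithin, mem_nhdsWithin_of_mem_nhds hball] with z hz hzb
    have hz' : z ≠ c := hz
    have hzc0 : (z - c)/2 ≠ 0 := by
      simp [sub_eq_zero, hz']
    have hznorm : ‖(z - c)/2‖ < 3 := by
      rw [Metric.mem_ball, dist_eq_norm] at hzb
      rw [norm_div]
      simp only [Complex.norm_ofNat]
      linarith
    have hs0 : Complex.sinh ((z - c)/2) ≠ 0 := sinh_ne_zero_of_small hzc0 hznorm
    rw [hg]
    simp only
    rw [phiT, phiZ, ← hc, ← ha, ← hb]
    rcases eq_or_ne (Complex.sinh (z/2)) 0 with h0 | h0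
    · rw [h0]; simp
    · field_simp
  have hfinal := h4.congr' heq
  have hval : 2 * I * Complex.sin ((Real.pi : ℂ) * (B : ℂ) / (2 * N)) *
        Complex.sin ((Real.pi : ℂ) * (2 - (B : ℂ)) / (2 * N)) /
        Complex.sin ((Real.pi : ℂ) / N) = 1 * (2 * g c) := by
    rw [hg]
    simp only
    have e1 : (c - a)/2 = I * ((Real.pi : ℂ) * (2 - B) / (2*N)) := by
      rw [hc, ha]; field_simp
    have e2 : (c - b)/2 = I * ((Real.pi : ℂ) * (B : ℂ) / (2*N)) := by
      rw [hc, hb]; field_simp; ring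
    rw [e1, e2, sinh_I_mul, sinh_I_mul, hsinhc]
    have hI : I ≠ 0 := Complex.I_ne_zero
    field_simp
  rw [hval]
  exact hfinal
end

section
/- The character χ_b evaluates as follows. Let N ≥ 3, let j be an integer with 1 ≤ j ≤ N−2, let b be an integer with 1 ≤ b ≤ N−1, and let γ̂ ∈ ℂ. Set ω = exp(2πi/N) and define q_0 = 1, q_k = ω^{−k} for k ∈ {1,…,N−1} with k ∉ {j, j+1}, q_j = ω^{−j}·exp(−2πiγ̂/N), and q_{j+1} = ω^{−(j+1)}·exp(2πiγ̂/N). Then the b-th elementary symmetric polynomial e_b(q_0, q_1, …, q_{N−1}) = Σ_{0 ≤ k_1 < ⋯ < k_b ≤ N−1} q_{k_1}⋯q_{k_b} satisfies exp(iπb(N−1)/N)·ω^{b}·e_b(q_0, …, q_{N−1}) = −4·ω^{−bj}·(sin(bπ/N)/sin(π/N))·sin(πγ̂/N)·sin(π(1−γ̂)/N), where sin denotes the complex sine. -/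
open Complex

open Polynomial in
private lemma toda_tele (e v : ℂ) (K : ℕ) :
    (X + C e) * ∑ m ∈ Finset.range K, C (v * (-e) ^ (K - 1 - m)) * X ^ m
      = C v * X ^ K - C (v * (-e) ^ K) := by
  induction K generalizing v with
  | zero => simp
  | succ K ih =>
    have hsum : ∑ m ∈ Finset.range (K + 1), C (v * (-e) ^ (K + 1 - 1 - m)) * X ^ m
        = (∑ m ∈ Finset.range K, C ((v * -e) * (-e) ^ (K - 1 - m)) * X ^ m)
          + C v * X ^ K := by
      rw [Finset.sum_range_succ]
      congr 1
      · refine Finset.sum_congr rfl fun m hm => ?_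
        have hm' : m < K := Finset.mem_range.mp hm
        have h1 : K + 1 - 1 - m = (K - 1 - m) + 1 := by omega
        rw [h1, pow_succ]
        ring_nf
      · norm_num
    rw [hsum, mul_add, ih (v * -e)]
    simp only [C_mul, C_neg, C_pow, pow_succ]
    ring

private lemma toda_l1 (A g u : ℂ) (hA : A ≠ 0) (hg : g ≠ 0) (hu : u ≠ 0) :
    1/(A*g^2) + g^2/(A*u^2) - 1/A - 1/(A*u^2)
      = (u^2-g^2)*(1-g^2)/(A*u^2*g^2) := by
  have hD : A*u^2*g^2 ≠ 0 := by simp [hA, hu, hg]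
  have e1 : 1/(A*g^2) = u^2/(A*u^2*g^2) := by
    rw [div_eq_div_iff (by simp [hA, hg]) hD]; ring
  have e2 : g^2/(A*u^2) = g^2*g^2/(A*u^2*g^2) := by
    rw [div_eq_div_iff (by simp [hA, hu]) hD]; ring
  have e3 : (1:ℂ)/A = u^2*g^2/(A*u^2*g^2) := by
    rw [div_eq_div_iff hA hD]; ring
  have e4 : 1/(A*u^2) = g^2/(A*u^2*g^2) := by
    rw [div_eq_div_iff (by simp [hA, hu]) hD]; ring
  rw [e1, e2, e3, e4, ← add_div, div_sub_div_same, div_sub_div_same,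
    div_eq_div_iff hD hD]
  ring
private lemma toda_l2 (A u t : ℂ) (hA : A ≠ 0) (hu : u ≠ 0) (ht : t ≠ 0) (h : t = 1 - u^2) :
    (1/(A*u^2) - 1/A)⁻¹ = (1/t) * (A*u^2) := by
  have e3 : (1:ℂ)/A = u^2/(A*u^2) := by
    rw [div_eq_div_iff hA (by simp [hA, hu])]; ring
  rw [e3, div_sub_div_same, ← h, inv_div]
  ring
private lemma toda_l3 (M B : ℂ) (hM : M ≠ 0) (hB : B ≠ 0) : 1/M - 1/(M*B^2) = (B^2-1)/(M*B^2) := by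
  have e : (1:ℂ)/M = B^2/(M*B^2) := by
    rw [div_eq_div_iff hM (by simp [hM, hB])]; ring
  rw [e, div_sub_div_same]
private lemma toda_l4 (B : ℂ) (hB : B ≠ 0) : 1/B - B = (1-B^2)/B := by
  rw [eq_div_iff hB, sub_mul, one_div_mul_cancel hB]; ring
private lemma toda_l5 (u t : ℂ) (hu : u ≠ 0) (h : t = 1 - u^2) : 1/u - u = t * (1/u) := by
  rw [h, mul_one_div, eq_div_iff hu, sub_mul, one_div_mul_cancel hu]; ring

private lemma toda_core (u g A B M t : ℂ) (hu0 : u ≠ 0) (hg0 : g ≠ 0) (hA0 : A ≠ 0)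
    (hB0 : B ≠ 0) (hM0 : M ≠ 0) (ht : t ≠ 0) :
    (1/B) * B^2 * (((u^2-g^2)*(1-g^2)/(A*u^2*g^2)) * (((B^2-1)/(M*B^2)) * ((1/t) * (A*u^2))))
    = -4 * (1/M) * (((1-B^2)/B) / (t*(1/u))) * (((1-g^2)/g) * ((g^2-u^2)/(u*g)) * (-1)/4) := by
  field_simp
  ring

private lemma toda_l6 (u g : ℂ) (hu : u ≠ 0) (hg : g ≠ 0) :
    u⁻¹*g - u*g⁻¹ = (g^2-u^2)/(u*g) := by
  rw [eq_div_iff (mul_ne_zero hu hg), sub_mul,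
    show u⁻¹*g*(u*g) = (u*u⁻¹)*(g*g) by ring,
    show u*g⁻¹*(u*g) = (g*g⁻¹)*(u*u) by ring,
    mul_inv_cancel₀ hu, mul_inv_cancel₀ hg]
  ring

private lemma toda_l4inv (B : ℂ) (hB : B ≠ 0) : B⁻¹ - B = (1-B^2)/B := by
  rw [inv_eq_one_div]; exact toda_l4 B hB

private lemma toda_l5inv (u t : ℂ) (hu : u ≠ 0) (h : t = 1 - u^2) :
    u⁻¹ - u = t * (1/u) := by
  rw [inv_eq_one_div]; exact toda_l5 u t hu h

set_option maxHeartbeats 1000000 in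
open Polynomial in
/-- Evaluation of the character `χ_b` in the affine `A_{N−1}`-Toda model: with
`ω = exp(2πi/N)`, `q_k = ω^{−k}` for `k ∉ {j, j+1}` (in particular `q_0 = 1`),
`q_j = ω^{−j}·exp(−2πiγ̂/N)` and `q_{j+1} = ω^{−(j+1)}·exp(2πiγ̂/N)`, the `b`-th
elementary symmetric polynomial of `q_0, …, q_{N−1}` satisfies
`exp(iπb(N−1)/N)·ω^b·e_b(q) = −4·ω^{−bj}·(sin(bπ/N)/sin(π/N))·sin(πγ̂/N)·sin(π(1−γ̂)/N)`. -/
theorem toda_character_evaluation (N : ℕ) (hN : 3 ≤ N) (j : ℕ) (hj1 : 1 ≤ j)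
    (hj2 : j ≤ N - 2) (b : ℕ) (hb1 : 1 ≤ b) (hb2 : b ≤ N - 1) (γ : ℂ)
    (ω : ℂ) (hω : ω = Complex.exp (2 * (Real.pi : ℂ) * I / N))
    (q : ℕ → ℂ)
    (hq : ∀ k, q k =
      if k = j then ω ^ (-(j : ℤ)) * Complex.exp (-(2 * (Real.pi : ℂ) * I * γ) / N)
      else if k = j + 1 then
        ω ^ (-((j : ℤ) + 1)) * Complex.exp (2 * (Real.pi : ℂ) * I * γ / N)
      else ω ^ (-(k : ℤ))) :
    Complex.exp (I * (Real.pi : ℂ) * b * (N - 1) / N) * ω ^ b *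
        (∑ s ∈ Finset.powersetCard b (Finset.range N), ∏ k ∈ s, q k) =
      -4 * ω ^ (-((b : ℤ) * j)) * (Complex.sin (b * (Real.pi : ℂ) / N) /
        Complex.sin ((Real.pi : ℂ) / N)) * Complex.sin ((Real.pi : ℂ) * γ / N) *
        Complex.sin ((Real.pi : ℂ) * (1 - γ) / N) := by
  have hNn : N ≠ 0 := by omega
  set π' : ℂ := (Real.pi : ℂ) with hπ'
  set ζ : ℂ := ω⁻¹ with hζ
  set x : ℂ := Complex.exp (-(2 * π' * I * γ) / N) with hx
  set y : ℂ := Complex.exp (2 * π' * I * γ / N) with hy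
  set a : ℂ := ζ ^ j with ha
  set a' : ℂ := ζ ^ (j + 1) with ha'
  set w : ℂ := (a' - a)⁻¹ with hw
  have hprim : IsPrimitiveRoot ω N := by rw [hω]; exact Complex.isPrimitiveRoot_exp N hNn
  have hων1 : ω ≠ 1 := hprim.ne_one (by omega)
  have hω0 : ω ≠ 0 := hprim.ne_zero hNn
  have hprimζ : IsPrimitiveRoot ζ N := hprim.inv
  have hζ0 : ζ ≠ 0 := inv_ne_zero hω0
  have hζ1 : ζ ≠ 1 := by rw [hζ, ne_eq, inv_eq_one]; exact hων1
  have ha0 : a ≠ 0 := pow_ne_zero _ hζ0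
  have ha'a : a' - a ≠ 0 := by
    have h : a' - a = a * (ζ - 1) := by rw [ha, ha', pow_succ]; ring
    rw [h]; exact mul_ne_zero ha0 (sub_ne_zero.mpr hζ1)
  have hw1 : w * (a' - a) = 1 := inv_mul_cancel₀ ha'a
  have haN : a ^ N = 1 := by rw [ha, ← pow_mul, mul_comm, pow_mul, hprimζ.pow_eq_one, one_pow]
  have ha'N : a' ^ N = 1 := by rw [ha', ← pow_mul, mul_comm, pow_mul, hprimζ.pow_eq_one, one_pow]
  -- q values
  have hqj : q j = a * x := by
    rw [hq j, if_pos rfl, ha, hζ, zpow_neg, zpow_natCast, inv_pow]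
  have hqj1 : q (j + 1) = a' * y := by
    rw [hq (j + 1), if_neg (by omega), if_pos rfl, ha', hζ,
      show -((j : ℤ) + 1) = -(((j + 1 : ℕ) : ℤ)) by push_cast; ring,
      zpow_neg, zpow_natCast, inv_pow]
  have hjmem : j ∈ Finset.range N := Finset.mem_range.mpr (by omega)
  have hj1mem : j + 1 ∈ (Finset.range N).erase j :=
    Finset.mem_erase.mpr ⟨by omega, Finset.mem_range.mpr (by omega)⟩
  set T : Finset ℕ := ((Finset.range N).erase j).erase (j + 1) with hT
  set Q : ℂ[X] := ∏ k ∈ T, (X + C (ζ ^ k)) with hQdef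
  have hsplitq : ∀ f : ℕ → ℂ[X],
      ∏ k ∈ Finset.range N, f k = f j * (f (j + 1) * ∏ k ∈ T, f k) := by
    intro f
    rw [← Finset.mul_prod_erase _ f hjmem, ← Finset.mul_prod_erase _ f hj1mem]
  have hqT : ∀ k ∈ T, (X + C (q k)) = (X + C (ζ ^ k)) := by
    intro k hk
    have hk1 : k ≠ j + 1 := (Finset.mem_erase.mp hk).1
    have hk2 : k ≠ j := (Finset.mem_erase.mp (Finset.mem_erase.mp hk).2).1
    rw [hq k, if_neg hk2, if_neg hk1, hζ, zpow_neg, zpow_natCast, inv_pow]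
  have hpstd : (X : ℂ[X]) ^ N - C ((-1 : ℂ) ^ N) = ∏ k ∈ Finset.range N, (X + C (ζ ^ k)) := by
    have h := X_pow_sub_C_eq_prod hprimζ (show 0 < N by omega) (rfl : (-1 : ℂ) ^ N = (-1) ^ N)
    rw [h]
    exact Finset.prod_congr rfl fun k _ => by rw [mul_neg_one, map_neg, sub_neg_eq_add]
  have hQstd : (X + C a) * ((X + C a') * Q) = (X : ℂ[X]) ^ N - C ((-1 : ℂ) ^ N) := by
    rw [hpstd, hsplitq (fun k => X + C (ζ ^ k))]
  -- telescoping polynomials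
  set Rexp : ℂ[X] := ∑ m ∈ Finset.range N, C ((1 : ℂ) * (-a') ^ (N - 1 - m)) * X ^ m with hRdef
  have hR : (X + C a') * Rexp = (X : ℂ[X]) ^ N - C ((-1 : ℂ) ^ N) := by
    rw [hRdef, toda_tele]
    have h1 : (-a') ^ N = (-1 : ℂ) ^ N := by rw [neg_pow, ha'N, mul_one]
    rw [h1, C_1, one_mul, one_mul]
  set c : ℕ → ℂ := fun m => ((-a) ^ (N - 1 - m) - (-a') ^ (N - 1 - m)) * w with hcdef
  set Qexp : ℂ[X] := ∑ m ∈ Finset.range (N - 1), C (c m) * X ^ m with hQexpdef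
  have hQsplit : Qexp
      = (∑ m ∈ Finset.range (N - 1), C ((-(w * a)) * (-a) ^ (N - 1 - 1 - m)) * X ^ m)
        + (∑ m ∈ Finset.range (N - 1), C ((w * a') * (-a') ^ (N - 1 - 1 - m)) * X ^ m) := by
    rw [hQexpdef, ← Finset.sum_add_distrib]
    refine Finset.sum_congr rfl fun m hm => ?_
    have hm' : m < N - 1 := Finset.mem_range.mp hm
    rw [← add_mul, ← C_add]
    congr 2
    rw [hcdef]
    simp only []
    rw [show N - 1 - m = (N - 1 - 1 - m) + 1 by omega, pow_succ, pow_succ]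
    ring
  have htele1 := toda_tele a (-(w * a)) (N - 1)
  have htele2 := toda_tele a' (w * a') (N - 1)
  set lower : ℂ[X] := ∑ m ∈ Finset.range (N - 1), C ((-a') ^ (N - 1 - m)) * X ^ m with hlow
  have h4 : C (a - a')
      * (∑ m ∈ Finset.range (N - 1), C ((w * a') * (-a') ^ (N - 1 - 1 - m)) * X ^ m)
      = lower := by
    rw [hlow, Finset.mul_sum]
    refine Finset.sum_congr rfl fun m hm => ?_
    have hm' : m < N - 1 := Finset.mem_range.mp hm
    rw [← mul_assoc, ← C_mul]
    congr 2
    rw [show N - 1 - m = (N - 1 - 1 - m) + 1 by omega, pow_succ]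
    linear_combination (-(a' * (-a') ^ (N - 1 - 1 - m))) * hw1
  have h5 : Rexp = lower + X ^ (N - 1) := by
    rw [hRdef, hlow]
    conv_lhs => rw [show N = (N - 1) + 1 by omega]
    rw [Finset.sum_range_succ]
    have e1 : ∀ m : ℕ, (N - 1) + 1 - 1 - m = N - 1 - m := fun m => by omega
    simp only [e1, Nat.sub_self, pow_zero, mul_one, one_mul, C_1]
  have hQtele : (X + C a) * Qexp = Rexp := by
    rw [hQsplit, h5]
    have hC1 : C (-(w * a)) + C (w * a') = 1 := by
      rw [← C_add, show -(w * a) + w * a' = 1 by linear_combination hw1, C_1]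
    have hC2 : C (-(w * a) * (-a) ^ (N - 1)) + C ((w * a') * (-a') ^ (N - 1)) = 0 := by
      rw [← C_add]
      have e1 : a * a ^ (N - 1) = 1 := by
        rw [← pow_succ', show N - 1 + 1 = N by omega, haN]
      have e2 : a' * a' ^ (N - 1) = 1 := by
        rw [← pow_succ', show N - 1 + 1 = N by omega, ha'N]
      have h0 : -(w * a) * (-a) ^ (N - 1) + (w * a') * (-a') ^ (N - 1) = 0 := by
        rw [neg_pow, neg_pow]
        linear_combination ((-1 : ℂ) ^ (N - 1) * w) * e2 - ((-1 : ℂ) ^ (N - 1) * w) * e1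
      rw [h0, C_0]
    have hCsub : C (a - a') = C a - C a' := C_sub
    linear_combination htele1 + htele2 + h4
      - (∑ m ∈ Finset.range (N - 1), C ((w * a') * (-a') ^ (N - 1 - 1 - m)) * X ^ m) * hCsub
      + X ^ (N - 1) * hC1 - hC2
  have hXa : (X + C a) ≠ 0 := (monic_X_add_C a).ne_zero
  have hXa' : (X + C a') ≠ 0 := (monic_X_add_C a').ne_zero
  have h6 : (X + C a) * ((X + C a') * Q) = (X + C a) * ((X + C a') * Qexp) := by
    rw [hQstd, mul_left_comm, hQtele, hR]
  have hQQ : Q = Qexp := mul_left_cancel₀ hXa' (mul_left_cancel₀ hXa h6)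
  -- the full product
  set p : ℂ[X] := ∏ k ∈ Finset.range N, (X + C (q k)) with hpdef
  have hQprod : ∏ k ∈ T, (X + C (q k)) = Q := by
    rw [hQdef]; exact Finset.prod_congr rfl hqT
  have hp : p = (X + C (a * x)) * ((X + C (a' * y)) * Qexp) := by
    rw [hpdef, hsplitq (fun k => X + C (q k)), hqj, hqj1, hQprod, hQQ]
  have hxy1 : x * y = 1 := by
    rw [hx, hy, ← Complex.exp_add,
      show -(2 * π' * I * γ) / N + 2 * π' * I * γ / N = 0 by ring, Complex.exp_zero]
  have hCxy : C x * C y = 1 := by rw [← C_mul, hxy1, C_1]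
  have hptrick : p = ((X : ℂ[X]) ^ N - C ((-1 : ℂ) ^ N))
      + C (a * x + a' * y - a - a') * (X * Qexp) := by
    rw [hp, ← hQstd, hQQ]
    simp only [C_add, C_sub, C_mul]
    linear_combination Qexp * C a * C a' * hCxy
  have hbN : b ≤ N := by omega
  have hsum : (∑ s ∈ Finset.powersetCard b (Finset.range N), ∏ k ∈ s, q k)
      = p.coeff (N - b) := by
    rw [hpdef, Finset.prod_X_add_C_coeff (Finset.range N) q
      (show N - b ≤ (Finset.range N).card by rw [Finset.card_range]; omega),
      Finset.card_range, Nat.sub_sub_self hbN]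
  have hNb1 : N - b = (N - 1 - b) + 1 := by omega
  have hcoeffp : p.coeff (N - b)
      = (a * x + a' * y - a - a') * Qexp.coeff (N - 1 - b) := by
    rw [hptrick, coeff_add, coeff_sub, coeff_X_pow, coeff_C,
      if_neg (show ¬(N - b = N) by omega), if_neg (show ¬(N - b = 0) by omega),
      coeff_C_mul, hNb1, coeff_X_mul]
    ring
  have hQexpcoeff : Qexp.coeff (N - 1 - b) = ((-a) ^ b - (-a') ^ b) * w := by
    rw [hQexpdef, finset_sum_coeff]
    simp only [coeff_C_mul, coeff_X_pow, mul_ite, mul_one, mul_zero]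
    rw [Finset.sum_ite_eq (Finset.range (N - 1)) (N - 1 - b) c,
      if_pos (Finset.mem_range.mpr (show N - 1 - b < N - 1 by omega))]
    rw [hcdef]
    simp only []
    rw [show N - 1 - (N - 1 - b) = b by omega]
  rw [hsum, hcoeffp, hQexpcoeff]
  -- final scalar computation
  set u : ℂ := Complex.exp (π' * I / N) with hu
  set g : ℂ := Complex.exp (π' * I * γ / N) with hg
  have hu0 : u ≠ 0 := Complex.exp_ne_zero _
  have hg0 : g ≠ 0 := Complex.exp_ne_zero _
  have hN0 : (N : ℂ) ≠ 0 := by exact_mod_cast hNn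
  have hωu : ω = u ^ 2 := by
    rw [hω, show 2 * π' * I / N = π' * I / N + π' * I / N by ring,
      Complex.exp_add, ← hu, sq]
  have hu21 : u ^ 2 ≠ 1 := by rw [← hωu]; exact hων1
  have hus : u⁻¹ - u ≠ 0 := by
    intro h
    apply hu21
    have h2 : u⁻¹ = u := sub_eq_zero.mp h
    calc u ^ 2 = u * u := sq u
    _ = u * u⁻¹ := by rw [h2]
    _ = 1 := mul_inv_cancel₀ hu0
  set A : ℂ := (u ^ 2) ^ j with hA
  set B : ℂ := u ^ b with hB
  set M : ℂ := (u ^ 2) ^ (b * j) with hM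
  set t : ℂ := 1 - u ^ 2 with htdef
  have hA0 : A ≠ 0 := pow_ne_zero _ (pow_ne_zero _ hu0)
  have hB0 : B ≠ 0 := pow_ne_zero _ hu0
  have hM0 : M ≠ 0 := pow_ne_zero _ (pow_ne_zero _ hu0)
  have ht0 : t ≠ 0 := sub_ne_zero.mpr (Ne.symm hu21)
  have hωb2 : ω ^ b = B ^ 2 := by rw [hωu, hB, pow_right_comm]
  have hu2bB : (u ^ 2) ^ b = B ^ 2 := by rw [hB, pow_right_comm]
  have hAbM : A ^ b = M := by rw [hA, hM, ← pow_mul, mul_comm j b]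
  have hxu : x = 1 / g ^ 2 := by
    rw [hx, show -(2 * π' * I * γ) / N = -(π' * I * γ / N + π' * I * γ / N) by ring,
      Complex.exp_neg, Complex.exp_add, ← hg, sq, one_div]
  have hyu : y = g ^ 2 := by
    rw [hy, show 2 * π' * I * γ / N = π' * I * γ / N + π' * I * γ / N by ring,
      Complex.exp_add, ← hg, sq]
  have haA : a = 1 / A := by rw [ha, hζ, hωu, inv_pow, hA, one_div]
  have ha'A : a' = 1 / (A * u ^ 2) := by
    rw [ha', hζ, hωu, inv_pow, pow_succ, hA, one_div]
  have hpref2 : Complex.exp (I * π' * b * ((N : ℂ) - 1) / N) = (-1) ^ b * (1 / B) := by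
    rw [show I * π' * (b : ℂ) * ((N : ℂ) - 1) / N
        = (b : ℂ) * (π' * I) - (b : ℂ) * (π' * I / N) by field_simp,
      Complex.exp_sub, Complex.exp_nat_mul, Complex.exp_nat_mul, ← hu, hπ',
      Complex.exp_pi_mul_I, hB, div_eq_mul_inv, inv_eq_one_div]
  have h2 : a * x + a' * y - a - a'
      = (u ^ 2 - g ^ 2) * (1 - g ^ 2) / (A * u ^ 2 * g ^ 2) := by
    rw [haA, ha'A, hxu, hyu,
      show 1/A * (1/g^2) + 1/(A*u^2) * g^2 - 1/A - 1/(A*u^2)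
        = 1/(A*g^2) + g^2/(A*u^2) - 1/A - 1/(A*u^2) by ring]
    exact toda_l1 A g u hA0 hg0 hu0
  have h3 : ((-a) ^ b - (-a') ^ b) * w
      = (-1) ^ b * ((B ^ 2 - 1) / (M * B ^ 2) * ((1 / t) * (A * u ^ 2))) := by
    rw [hw, haA, ha'A, toda_l2 A u t hA0 hu0 ht0 htdef, neg_pow (1/A) b, neg_pow (1/(A*u^2)) b,
      div_pow, div_pow, one_pow, mul_pow, hAbM, hu2bB]
    linear_combination ((-1 : ℂ) ^ b * ((1 / t) * (A * u ^ 2))) * (toda_l3 M B hM0 hB0)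
  have hb2 : ((-1 : ℂ)) ^ b * (-1) ^ b = 1 := by rw [← mul_pow]; norm_num
  have h4 : ω ^ (-((b : ℤ) * j)) = 1 / M := by
    rw [hωu, show -((b : ℤ) * j) = -(((b * j : ℕ) : ℤ)) by push_cast; ring,
      zpow_neg, zpow_natCast, hM, one_div]
  have hsinb : Complex.sin ((b : ℂ) * π' / N) = (B⁻¹ - B) * I / 2 := by
    simp only [Complex.sin]
    rw [show -((b : ℂ) * π' / N) * I = -((b : ℂ) * (π' * I / N)) by ring,
      show ((b : ℂ) * π' / N) * I = (b : ℂ) * (π' * I / N) by ring,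
      Complex.exp_neg, Complex.exp_nat_mul, ← hu, hB]
  have hsin1 : Complex.sin (π' / N) = (u⁻¹ - u) * I / 2 := by
    simp only [Complex.sin]
    rw [show -(π' / N) * I = -(π' * I / N) by ring,
      show (π' / N) * I = π' * I / N by ring, Complex.exp_neg, ← hu]
  have hsing : Complex.sin (π' * γ / N) = (g⁻¹ - g) * I / 2 := by
    simp only [Complex.sin]
    rw [show -(π' * γ / N) * I = -(π' * I * γ / N) by ring,
      show (π' * γ / N) * I = π' * I * γ / N by ring, Complex.exp_neg, ← hg]
  have hsinmg : Complex.sin (π' * (1 - γ) / N) = (u⁻¹ * g - u * g⁻¹) * I / 2 := by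
    simp only [Complex.sin]
    rw [show -(π' * (1 - γ) / N) * I = -(π' * I / N) + π' * I * γ / N by ring,
      show (π' * (1 - γ) / N) * I = π' * I / N + -(π' * I * γ / N) by ring,
      Complex.exp_add, Complex.exp_add, Complex.exp_neg, Complex.exp_neg, ← hu, ← hg]
  have hquot2 : Complex.sin ((b : ℂ) * π' / N) / Complex.sin (π' / N)
      = ((1 - B ^ 2) / B) / (t * (1 / u)) := by
    have hq0 : ((B⁻¹ - B) * I / 2) / ((u⁻¹ - u) * I / 2) = (B⁻¹ - B) / (u⁻¹ - u) := by
      rw [div_div_div_eq,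
        div_eq_div_iff (by simp [hus, I_ne_zero, sub_ne_zero]) (by simp [hus])]
      ring
    rw [hsinb, hsin1, hq0, toda_l4inv B hB0, toda_l5inv u t hu0 htdef]
  have hprod2 : Complex.sin (π' * γ / N) * Complex.sin (π' * (1 - γ) / N)
      = ((1 - g ^ 2) / g) * ((g ^ 2 - u ^ 2) / (u * g)) * (-1) / 4 := by
    rw [hsing, hsinmg,
      show ((g⁻¹ - g) * I / 2) * ((u⁻¹ * g - u * g⁻¹) * I / 2)
        = (g⁻¹ - g) * (u⁻¹ * g - u * g⁻¹) * I ^ 2 / 4 by ring, I_sq,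
      toda_l4inv g hg0, toda_l6 u g hu0 hg0]
  calc Complex.exp (I * π' * b * ((N : ℂ) - 1) / N) * ω ^ b *
        ((a * x + a' * y - a - a') * (((-a) ^ b - (-a') ^ b) * w))
      = ((-1 : ℂ) ^ b * (-1) ^ b) * ((1 / B) * B ^ 2 *
          (((u ^ 2 - g ^ 2) * (1 - g ^ 2) / (A * u ^ 2 * g ^ 2)) *
            (((B ^ 2 - 1) / (M * B ^ 2)) * ((1 / t) * (A * u ^ 2))))) := by
        rw [hpref2, hωb2, h2, h3]; ring
    _ = (1 / B) * B ^ 2 * (((u ^ 2 - g ^ 2) * (1 - g ^ 2) / (A * u ^ 2 * g ^ 2)) *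
          (((B ^ 2 - 1) / (M * B ^ 2)) * ((1 / t) * (A * u ^ 2)))) := by
        rw [hb2, one_mul]
    _ = -4 * (1 / M) * (((1 - B ^ 2) / B) / (t * (1 / u))) *
          (((1 - g ^ 2) / g) * ((g ^ 2 - u ^ 2) / (u * g)) * (-1) / 4) :=
        toda_core u g A B M t hu0 hg0 hA0 hB0 hM0 ht0
    _ = -4 * ω ^ (-((b : ℤ) * j)) * (Complex.sin ((b : ℂ) * π' / N) / Complex.sin (π' / N)) *
          Complex.sin (π' * γ / N) * Complex.sin (π' * (1 - γ) / N) := by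
        rw [← h4, ← hquot2, ← hprod2]; ring
end
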